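/- Let n ≥ 1, ℓ ∈ {0,…,n-1}, and let L^{n-ℓ-1} ⊂ [-1,1]^n be the set of points with at least ℓ+1 zero coordinates. Define φ_ℓ : [-1,1]^n \ L^{n-ℓ-1} → [-1,1]^n by φ_ℓ(x)_i = sgn(x_i) if |x_i| ≥ |x|_ℓ and φ_ℓ(x)_i = x_i/|x|_ℓ if |x_i| < |x|_ℓ, where |x|_ℓ = min_{|S|=ℓ+1} max_{i∈S}|x_i|. Then every component of φ_ℓ(x) satisfies |φ_ℓ(x)_i| ≤ 1, and at most ℓ components of φ_ℓ(x) have absolute value strictly less than 1 (i.e., φ_ℓ maps into the ℓ-dimensional skeleton of the cube). -/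

import Mathlib

open scoped Classical

/-- `|x|_ℓ = min_{S ⊆ {1,…,n}, |S| = ℓ+1} max_{i ∈ S} |x_i|`. -/
noncomputable def cubeNorm (n ℓ : ℕ) (x : Fin n → ℝ) : ℝ :=
  ⨅ S : {S : Finset (Fin n) // S.card = ℓ + 1}, ⨆ i : {i // i ∈ S.1}, |x i.1|

/-- The retraction `φ_ℓ` onto the `ℓ`-skeleton of the cube. -/
noncomputable def phiSkel (n ℓ : ℕ) (x : Fin n → ℝ) : Fin n → ℝ := fun i =>
  if cubeNorm n ℓ x ≤ |x i| then Real.sign (x i) else x i / cubeNorm n ℓ x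

lemma supAbs_attained {n : ℕ} (x : Fin n → ℝ) (S : Finset (Fin n)) (hS : S.Nonempty) :
    ∃ j ∈ S, (⨆ i : {i // i ∈ S}, |x i.1|) = |x j| := by
  haveI : Nonempty {i // i ∈ S} := ⟨⟨hS.choose, hS.choose_spec⟩⟩
  obtain ⟨⟨j, hj⟩, hmax⟩ := Finite.exists_max (fun i : {i // i ∈ S} => |x i.1|)
  refine ⟨j, hj, le_antisymm (ciSup_le fun i => hmax i) ?_⟩
  exact le_ciSup (f := fun i : {i // i ∈ S} => |x i.1|) (Set.Finite.bddAbove (Set.finite_range _)) ⟨j, hj⟩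

lemma cubeNorm_le {n ℓ : ℕ} (x : Fin n → ℝ) (S : Finset (Fin n)) (hS : S.card = ℓ + 1) :
    cubeNorm n ℓ x ≤ ⨆ i : {i // i ∈ S}, |x i.1| :=
  ciInf_le (Set.Finite.bddBelow (Set.finite_range _)) (⟨S, hS⟩ : {S : Finset (Fin n) // S.card = ℓ + 1})

/-- `φ_ℓ` maps `[-1,1]^n \ L^{n-ℓ-1}` into the `ℓ`-skeleton of the cube:
all components have absolute value at most 1, and at most `ℓ` of them have
absolute value strictly less than 1. -/
theorem stmt_7 (n ℓ : ℕ) (hn : 1 ≤ n) (hℓ : ℓ < n) (x : Fin n → ℝ)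
    (hx : ∀ i, x i ∈ Set.Icc (-1 : ℝ) 1)
    (hL : ¬ ∃ S : Finset (Fin n), ℓ + 1 ≤ S.card ∧ ∀ i ∈ S, x i = 0) :
    (∀ i, |phiSkel n ℓ x i| ≤ 1) ∧
      (Finset.univ.filter fun i => |phiSkel n ℓ x i| < 1).card ≤ ℓ := by
  set c := cubeNorm n ℓ x with hc
  -- index type is nonempty
  obtain ⟨S0, -, hS0⟩ := Finset.exists_subset_card_eq (s := (Finset.univ : Finset (Fin n))) (n := ℓ + 1)
    (by simpa using hℓ)
  haveI : Nonempty {S : Finset (Fin n) // S.card = ℓ + 1} := ⟨⟨S0, hS0⟩⟩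
  -- c > 0
  have hcpos : 0 < c := by
    obtain ⟨⟨S1, hS1⟩, hmin⟩ :=
      Finite.exists_min (fun S : {S : Finset (Fin n) // S.card = ℓ + 1} =>
        ⨆ i : {i // i ∈ S.1}, |x i.1|)
    have hceq : c = ⨆ i : {i // i ∈ S1}, |x i.1| :=
      le_antisymm (cubeNorm_le x S1 hS1) (le_ciInf fun S => hmin S)
    obtain ⟨j, hj, hxj⟩ : ∃ j ∈ S1, x j ≠ 0 := by
      by_contra h
      push_neg at h
      exact hL ⟨S1, le_of_eq hS1.symm, h⟩
    have h1 : |x j| ≤ ⨆ i : {i // i ∈ S1}, |x i.1| :=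
      le_ciSup (f := fun i : {i // i ∈ S1} => |x i.1|) (Set.Finite.bddAbove (Set.finite_range _)) ⟨j, hj⟩
    have := abs_pos.mpr hxj
    linarith [hceq ▸ h1]
  -- each component has abs ≤ 1, and abs < 1 only if |x i| < c
  have key : ∀ i, |phiSkel n ℓ x i| ≤ 1 ∧ (|phiSkel n ℓ x i| < 1 → |x i| < c) := by
    intro i
    unfold phiSkel
    rw [← hc]
    by_cases h : c ≤ |x i|
    · have hxi : x i ≠ 0 := fun h0 => by simp [h0] at h; linarith
      rw [if_pos h]
      rcases lt_or_gt_of_ne hxi with h' | h'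
      · rw [Real.sign_of_neg h']; norm_num
      · rw [Real.sign_of_pos h']; norm_num
    · rw [if_neg h]
      push_neg at h
      have : |x i / c| < 1 := by
        rw [abs_div, abs_of_pos hcpos, div_lt_one hcpos]
        exact h
      exact ⟨this.le, fun _ => h⟩
  refine ⟨fun i => (key i).1, ?_⟩
  by_contra hcard
  push_neg at hcard
  have hsub : (Finset.univ.filter fun i => |phiSkel n ℓ x i| < 1) ⊆
      Finset.univ.filter fun i => |x i| < c := by
    intro i hi
    simp only [Finset.mem_filter, Finset.mem_univ, true_and] at hi ⊢
    exact (key i).2 hi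
  have hcard2 : ℓ + 1 ≤ (Finset.univ.filter fun i => |x i| < c).card :=
    le_trans hcard (Finset.card_le_card hsub)
  obtain ⟨S, hSsub, hScard⟩ := Finset.exists_subset_card_eq hcard2
  obtain ⟨j, hj, hjeq⟩ := supAbs_attained x S (Finset.card_pos.mp (by omega))
  have h1 : c ≤ |x j| := hjeq ▸ cubeNorm_le x S hScard
  have h2 : |x j| < c := by
    have := hSsub hj
    simpa using this
  linarith
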